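/- arXiv:1104.1579 — 7 statements merged into one kernel-verified Lean document; each statement's English description precedes it below -/
import Mathlib

section
/- Let m ≥ 2, k ≥ 1, n ≥ 1 be integers and define F_n(x) = x^{n+k+3} + (m−1)x^{k+3} + (m²−m)x − m². Then every complex zero α of F_n satisfies |α| ≥ 1, and if |α| = 1 then α = 1. -/
theorem stmt2 (m k n : ℕ) (hm : 2 ≤ m) (hk : 1 ≤ k) (hn : 1 ≤ n) (α : ℂ)
    (hα : α ^ (n + k + 3) + ((m : ℂ) - 1) * α ^ (k + 3) + ((m : ℂ) ^ 2 - m) * α - (m : ℂ) ^ 2 = 0) :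
    1 ≤ ‖α‖ ∧ (‖α‖ = 1 → α = 1) := by
  have hm2 : (2:ℝ) ≤ (m:ℝ) := by exact_mod_cast hm
  set r := ‖α‖ with hr
  have hr0 : 0 ≤ r := norm_nonneg α
  have heq : (m : ℂ)^2 = α ^ (n + k + 3) + ((m : ℂ) - 1) * α ^ (k + 3) + ((m : ℂ) ^ 2 - m) * α := by
    linear_combination -hα
  have hc1 : ((m:ℂ) - 1) = (((m:ℝ) - 1 : ℝ) : ℂ) := by push_cast; ring
  have hc2 : ((m:ℂ)^2 - m) = (((m:ℝ)^2 - (m:ℝ) : ℝ) : ℂ) := by push_cast; ring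
  have habs1 : ‖(m:ℂ) - 1‖ = (m:ℝ) - 1 := by
    rw [hc1, Complex.norm_real, Real.norm_eq_abs, abs_of_nonneg (by linarith)]
  have habs2 : ‖(m:ℂ)^2 - m‖ = (m:ℝ)^2 - (m:ℝ) := by
    rw [hc2, Complex.norm_real, Real.norm_eq_abs, abs_of_nonneg (by nlinarith)]
  have key : (m:ℝ)^2 ≤ r^(n+k+3) + ((m:ℝ)-1) * r^(k+3) + ((m:ℝ)^2-(m:ℝ)) * r := by
    calc (m:ℝ)^2 = ‖(m:ℂ)^2‖ := by
          rw [norm_pow, Complex.norm_natCast]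
      _ = ‖α ^ (n + k + 3) + ((m : ℂ) - 1) * α ^ (k + 3) + ((m : ℂ) ^ 2 - m) * α‖ :=
          congrArg (‖·‖) heq
      _ ≤ ‖α ^ (n + k + 3) + ((m : ℂ) - 1) * α ^ (k + 3)‖
            + ‖((m : ℂ) ^ 2 - m) * α‖ := norm_add_le _ _
      _ ≤ ‖α ^ (n + k + 3)‖ + ‖((m : ℂ) - 1) * α ^ (k + 3)‖
            + ‖((m : ℂ) ^ 2 - m) * α‖ := by
          gcongr
          exact norm_add_le _ _
      _ = r^(n+k+3) + ((m:ℝ)-1) * r^(k+3) + ((m:ℝ)^2-(m:ℝ)) * r := by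
          rw [norm_mul, norm_mul, norm_pow, norm_pow, habs1, habs2]
  have h1le : 1 ≤ r := by
    by_contra h
    push_neg at h
    have p1 : r^(n+k+3) < 1 := pow_lt_one₀ hr0 h (by omega)
    have p2 : r^(k+3) < 1 := pow_lt_one₀ hr0 h (by omega)
    have q2 : ((m:ℝ)-1) * r^(k+3) ≤ ((m:ℝ)-1) * 1 :=
      mul_le_mul_of_nonneg_left p2.le (by linarith)
    have q3 : ((m:ℝ)^2-(m:ℝ)) * r ≤ ((m:ℝ)^2-(m:ℝ)) * 1 :=
      mul_le_mul_of_nonneg_left h.le (by nlinarith)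
    nlinarith
  refine ⟨h1le, fun hab => ?_⟩
  -- equality case
  have heq' : ((m:ℝ)^2 : ℂ) = α ^ (n + k + 3) + (((m:ℝ)-1 : ℝ) : ℂ) * α ^ (k + 3)
      + (((m:ℝ)^2-(m:ℝ) : ℝ) : ℂ) * α := by
    rw [← hc1, ← hc2]; push_cast; linear_combination -hα
  have hre := congrArg Complex.re heq'
  rw [← Complex.ofReal_pow] at hre
  simp only [Complex.add_re, Complex.mul_re, Complex.ofReal_re, Complex.ofReal_im,
    zero_mul, sub_zero] at hre
  have hx : (α ^ (n+k+3)).re ≤ 1 := by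
    have := Complex.re_le_norm (α ^ (n+k+3))
    rwa [norm_pow, ← hr, hab, one_pow] at this
  have hy : (α ^ (k+3)).re ≤ 1 := by
    have := Complex.re_le_norm (α ^ (k+3))
    rwa [norm_pow, ← hr, hab, one_pow] at this
  have hz : α.re ≤ 1 := by
    have := Complex.re_le_norm α
    rwa [← hr, hab] at this
  have hmm : (0:ℝ) < (m:ℝ)^2 - (m:ℝ) := by nlinarith
  have hqy : ((m:ℝ)-1) * (α ^ (k+3)).re ≤ ((m:ℝ)-1) * 1 :=
    mul_le_mul_of_nonneg_left hy (by linarith)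
  have hge : 1 ≤ α.re := by nlinarith
  have hre1 : α.re = 1 := le_antisymm hz hge
  have hsq : α.re * α.re + α.im * α.im = 1 := by
    have h := Complex.sq_norm α
    rw [← hr, hab, Complex.normSq_apply] at h
    linarith [h]
  have him2 : α.im * α.im = 0 := by rw [hre1] at hsq; linarith
  have him : α.im = 0 := by
    rcases mul_self_eq_zero.mp him2 with h; exact h
  exact Complex.ext (by simpa using hre1) (by simpa using him)
end

section
/- Let m ≥ 2, k ≥ 1, n ≥ 1 be integers with n ≠ k+1. The polynomial F_n(x) = x^{n+k+3} + (m−1)x^{k+3} + (m²−m)x − m² cannot be written as a product of two binomials (x^{ℓ₁} + r₁)(x^{ℓ₂} + r₂) with positive integers ℓ₁, ℓ₂ and rational numbers r₁, r₂. -/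
open Polynomial

theorem stmt5 (m : ℤ) (hm : 2 ≤ m) (k n : ℕ) (hk : 1 ≤ k) (hn : 1 ≤ n) (hnk : n ≠ k + 1) :
    ¬ ∃ (l₁ l₂ : ℕ) (r₁ r₂ : ℚ), 1 ≤ l₁ ∧ 1 ≤ l₂ ∧
      (X ^ (n + k + 3) + C ((m : ℚ) - 1) * X ^ (k + 3) + C ((m : ℚ) ^ 2 - m) * X
          - C ((m : ℚ) ^ 2) : Polynomial ℚ)
        = (X ^ l₁ + C r₁) * (X ^ l₂ + C r₂) := by
  rintro ⟨l₁, l₂, r₁, r₂, hl₁, hl₂, hEq⟩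
  have hm' : (2:ℚ) ≤ (m:ℚ) := by exact_mod_cast hm
  -- degree of both sides
  have hdeg : l₁ + l₂ = n + k + 3 := by
    have h1 : (X ^ (n + k + 3) + C ((m : ℚ) - 1) * X ^ (k + 3) + C ((m : ℚ) ^ 2 - m) * X
        - C ((m : ℚ) ^ 2) : Polynomial ℚ).natDegree = n + k + 3 := by
      compute_degree!
      all_goals omega
    have h2 : ((X ^ l₁ + C r₁) * (X ^ l₂ + C r₂) : Polynomial ℚ).natDegree = l₁ + l₂ := by
      rw [(monic_X_pow_add_C r₁ (by omega : l₁ ≠ 0)).natDegree_mul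
          (monic_X_pow_add_C r₂ (by omega : l₂ ≠ 0)),
        natDegree_X_pow_add_C, natDegree_X_pow_add_C]
    rw [hEq, h2] at h1
    omega
  have hExp : (X ^ l₁ + C r₁) * (X ^ l₂ + C r₂)
      = X ^ (l₁ + l₂) + C r₂ * X ^ l₁ + C r₁ * X ^ l₂ + C (r₁ * r₂) := by
    rw [C_mul]; ring
  rw [hExp] at hEq
  -- general coefficient identity
  have hc : ∀ d : ℕ,
      (if d = n+k+3 then (1:ℚ) else 0) + ((m:ℚ)-1) * (if d = k+3 then 1 else 0)
        + ((m:ℚ)^2 - (m:ℚ)) * (if 1 = d then 1 else 0) - (if d = 0 then (m:ℚ)^2 else 0)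
      = (if d = l₁+l₂ then 1 else 0) + r₂ * (if d = l₁ then 1 else 0)
        + r₁ * (if d = l₂ then 1 else 0) + (if d = 0 then r₁*r₂ else 0) := by
    intro d
    have := congrArg (fun p => Polynomial.coeff p d) hEq
    simpa only [coeff_add, coeff_sub, coeff_C_mul, coeff_X_pow, coeff_C, coeff_X] using this
  -- constant term
  have h0 : r₁ * r₂ = -(m:ℚ)^2 := by
    have h := hc 0
    simp only [if_pos rfl, if_true, if_neg (show ¬(0 = n+k+3) by omega),
      if_neg (show ¬(0 = k+3) by omega), if_neg (show ¬(1 = 0) by omega),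
      if_neg (show ¬(0 = l₁+l₂) by omega), if_neg (show ¬(0 = l₁) by omega),
      if_neg (show ¬(0 = l₂) by omega)] at h
    linarith
  -- coefficient at k+3
  have hK : r₂ * (if k+3 = l₁ then (1:ℚ) else 0) + r₁ * (if k+3 = l₂ then 1 else 0)
      = (m:ℚ) - 1 := by
    have h := hc (k+3)
    simp only [if_pos rfl, if_true, if_neg (show ¬(k+3 = n+k+3) by omega),
      if_neg (show ¬(1 = k+3) by omega), if_neg (show ¬(k+3 = 0) by omega),
      if_neg (show ¬(k+3 = l₁+l₂) by omega)] at h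
    linarith
  -- coefficient at 1
  have h1 : r₂ * (if 1 = l₁ then (1:ℚ) else 0) + r₁ * (if 1 = l₂ then 1 else 0)
      = (m:ℚ)^2 - (m:ℚ) := by
    have h := hc 1
    simp only [if_pos rfl, if_true, if_neg (show ¬(1 = n+k+3) by omega),
      if_neg (show ¬(1 = k+3) by omega), if_neg (show ¬((1:ℕ) = 0) by omega),
      if_neg (show ¬(1 = l₁+l₂) by omega)] at h
    linarith
  have hKor : l₁ = k + 3 ∨ l₂ = k + 3 := by
    by_contra h
    push_neg at h
    rw [if_neg (fun hh => h.1 hh.symm), if_neg (fun hh => h.2 hh.symm)] at hK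
    simp at hK
    linarith
  have h1or : l₁ = 1 ∨ l₂ = 1 := by
    by_contra h
    push_neg at h
    rw [if_neg (fun hh => h.1 hh.symm), if_neg (fun hh => h.2 hh.symm)] at h1
    simp at h1
    nlinarith
  rcases hKor with hA | hA <;> rcases h1or with hB | hB
  · omega
  · rw [if_pos hA.symm, if_neg (show ¬(k+3 = l₂) by omega)] at hK
    rw [if_neg (show ¬(1 = l₁) by omega), if_pos hB.symm] at h1
    simp only [mul_one, mul_zero, add_zero, zero_add] at hK h1
    rw [hK, h1] at h0
    nlinarith
  · rw [if_neg (show ¬(k+3 = l₁) by omega), if_pos hA.symm] at hK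
    rw [if_pos hB.symm, if_neg (show ¬(1 = l₂) by omega)] at h1
    simp only [mul_one, mul_zero, add_zero, zero_add] at hK h1
    rw [hK, h1] at h0
    nlinarith
  · omega
end

section
/- Let m ≥ 2, k ≥ 1, n ≥ 1 be integers with n ≠ k+1. Any common divisor h(x) ∈ ℚ[x] of g₁(x) = x^{n+k+3} − m² and g₂(x) = (m−1)x^{k+3} + (m²−m)x divides x^{n+1}(x^{k−n+1} − 1) if n < k+1, and divides x^{k+2}(x^{n−k−1} − 1) if n > k+1. -/
open Polynomial

theorem stmt6 (m : ℤ) (hm : 2 ≤ m) (k n : ℕ) (hk : 1 ≤ k) (hn : 1 ≤ n) (hnk : n ≠ k + 1)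
    (h : Polynomial ℚ)
    (h1 : h ∣ X ^ (n + k + 3) - C ((m : ℚ) ^ 2))
    (h2 : h ∣ C ((m : ℚ) - 1) * X ^ (k + 3) + C ((m : ℚ) ^ 2 - m) * X) :
    (n < k + 1 → h ∣ X ^ (n + 1) * (X ^ (k - n + 1) - 1)) ∧
    (n > k + 1 → h ∣ X ^ (k + 2) * (X ^ (n - k - 1) - 1)) := by
  have hM : (m : ℚ) ≠ 0 := by
    have : (2:ℚ) ≤ (m:ℚ) := by exact_mod_cast hm
    linarith
  have hM1 : (m : ℚ) - 1 ≠ 0 := by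
    have : (2:ℚ) ≤ (m:ℚ) := by exact_mod_cast hm
    linarith
  -- p = X^(k+3) + m X
  have hp : h ∣ X ^ (k + 3) + C (m : ℚ) * X := by
    have heq : C ((m : ℚ) - 1) * X ^ (k + 3) + C ((m : ℚ) ^ 2 - m) * X
        = C ((m : ℚ) - 1) * (X ^ (k + 3) + C (m : ℚ) * X) := by
      rw [mul_add, ← mul_assoc, ← C_mul]
      ring_nf
    rw [heq] at h2
    have hu : IsUnit (C ((m : ℚ) - 1)) := isUnit_C.mpr hM1.isUnit
    exact hu.dvd_mul_left.mp h2
  -- q = X^(n+1) + m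
  have hq : h ∣ X ^ (n + 1) + C (m : ℚ) := by
    have hcomb : h ∣ C (m : ℚ) * (X ^ (n + 1) + C (m : ℚ)) := by
      have heq : C (m : ℚ) * (X ^ (n + 1) + C (m : ℚ))
          = X ^ n * (X ^ (k + 3) + C (m : ℚ) * X) - (X ^ (n + 3 + k) - C ((m : ℚ) ^ 2)) := by
        rw [show C ((m:ℚ)^2) = C (m:ℚ)^2 from map_pow C _ 2]
        ring_nf
      rw [heq]
      have h1' : h ∣ X ^ (n + 3 + k) - C ((m : ℚ) ^ 2) := by
        have : n + k + 3 = n + 3 + k := by ring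
        rwa [this] at h1
      exact dvd_sub (hp.mul_left _) h1'
    have hu : IsUnit (C (m : ℚ)) := isUnit_C.mpr hM.isUnit
    exact hu.dvd_mul_left.mp hcomb
  constructor
  · intro hlt
    have hnle : n ≤ k := Nat.lt_succ_iff.mp hlt
    obtain ⟨e, rfl⟩ := Nat.exists_eq_add_of_le hnle
    have key : h ∣ X * (X ^ (e + 1) - 1) := by
      have hcomb : h ∣ C (m : ℚ) * (X * (X ^ (e + 1) - 1)) := by
        have heq : C (m : ℚ) * (X * (X ^ (e + 1) - 1))
            = X ^ (e + 2) * (X ^ (n + 1) + C (m : ℚ)) - (X ^ (n + e + 3) + C (m : ℚ) * X) := by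
          ring_nf
        rw [heq]
        exact dvd_sub (hq.mul_left _) hp
      have hu : IsUnit (C (m : ℚ)) := isUnit_C.mpr hM.isUnit
      exact hu.dvd_mul_left.mp hcomb
    have hnen : n + e - n = e := by omega
    rw [hnen, show (X:Polynomial ℚ) ^ (n + 1) * (X ^ (e + 1) - 1)
        = X ^ n * (X * (X ^ (e + 1) - 1)) from by ring]
    exact key.mul_left _
  · intro hgt
    have : k + 2 ≤ n := hgt
    obtain ⟨d, rfl⟩ := Nat.exists_eq_add_of_le this
    have key : h ∣ X ^ (d + 1) - 1 := by
      have hcomb : h ∣ C (m : ℚ) * (X ^ (d + 1) - 1) := by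
        have heq : C (m : ℚ) * (X ^ (d + 1) - 1)
            = X ^ d * (X ^ (k + 3) + C (m : ℚ) * X) - (X ^ (k + 2 + d + 1) + C (m : ℚ)) := by
          ring_nf
        rw [heq]
        exact dvd_sub (hp.mul_left _) hq
      have hu : IsUnit (C (m : ℚ)) := isUnit_C.mpr hM.isUnit
      exact hu.dvd_mul_left.mp hcomb
    have hexp : k + 2 + d - k - 1 = d + 1 := by omega
    rw [hexp]
    exact key.mul_left _
end

section
/- Let k, m, n be positive integers with m² > k+1. Suppose α ∈ ℂ, α ≠ 1, and both α and 1/α are zeros of F_n(x) = x^{n+1} + (m²−k−1)x² − (2m²−k)x + m². Then α is a root of g(x) = (m⁴−m²k−m²)x² − (2m⁴−2m²k+k²+k)x + (m⁴−m²k−m²). -/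
theorem stmt12 (k m n : ℕ) (hk : 1 ≤ k) (hm : 1 ≤ m) (hn : 1 ≤ n)
    (hkm : (k : ℝ) + 1 < (m : ℝ) ^ 2) (α : ℂ) (hα0 : α ≠ 0) (hα1 : α ≠ 1)
    (h1 : α ^ (n + 1) + ((m : ℂ) ^ 2 - k - 1) * α ^ 2 - (2 * (m : ℂ) ^ 2 - k) * α + (m : ℂ) ^ 2 = 0)
    (h2 : (1 / α) ^ (n + 1) + ((m : ℂ) ^ 2 - k - 1) * (1 / α) ^ 2 - (2 * (m : ℂ) ^ 2 - k) * (1 / α)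
        + (m : ℂ) ^ 2 = 0) :
    ((m : ℂ) ^ 4 - (m : ℂ) ^ 2 * k - (m : ℂ) ^ 2) * α ^ 2
      - (2 * (m : ℂ) ^ 4 - 2 * (m : ℂ) ^ 2 * k + (k : ℂ) ^ 2 + k) * α
      + ((m : ℂ) ^ 4 - (m : ℂ) ^ 2 * k - (m : ℂ) ^ 2) = 0 := by
  set A : ℂ := (m : ℂ) ^ 2 - k - 1 with hA
  set B : ℂ := 2 * (m : ℂ) ^ 2 - k with hB
  set C : ℂ := (m : ℂ) ^ 2 with hC
  have hi : α⁻¹ * α = 1 := inv_mul_cancel₀ hα0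
  have hp : α⁻¹ ^ (n + 1) * α ^ (n + 1) = 1 := by rw [← mul_pow, hi, one_pow]
  simp only [one_div] at h2
  have key2 : α ^ 2 + A * α ^ (n + 1) - B * (α * α ^ (n + 1)) + C * (α ^ 2 * α ^ (n + 1)) = 0 := by
    linear_combination (α ^ (n + 1) * α ^ 2) * h2 - α ^ 2 * hp
      - A * α ^ (n + 1) * (α⁻¹ * α + 1) * hi + B * α ^ (n + 1) * α * hi
  have hP : α ^ (n + 1) = -A * α ^ 2 + B * α - C := by linear_combination h1
  rw [hP] at key2
  -- key2 is now the palindromic quartic; divide by (α - 1)^2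
  have hd : α - 1 ≠ 0 := sub_ne_zero.mpr hα1
  have hQ : (α - 1) ^ 2 *
      (((m : ℂ) ^ 4 - (m : ℂ) ^ 2 * k - (m : ℂ) ^ 2) * α ^ 2
        - (2 * (m : ℂ) ^ 4 - 2 * (m : ℂ) ^ 2 * k + (k : ℂ) ^ 2 + k) * α
        + ((m : ℂ) ^ 4 - (m : ℂ) ^ 2 * k - (m : ℂ) ^ 2)) = 0 := by
    rw [hA, hB, hC] at key2
    linear_combination -key2
  rcases mul_eq_zero.mp hQ with h | h
  · exact absurd (pow_eq_zero_iff (by norm_num) |>.mp h) hd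
  · exact h
end

section
/- (Brauer) Let f(x) = x^n − a_{n−1}x^{n−1} − a_{n−2}x^{n−2} − ... − a₁x − a₀ with integer coefficients satisfying a_{n−1} ≥ a_{n−2} ≥ ... ≥ a₀ > 0. Then f is irreducible over ℚ. -/
open Polynomial Finset

noncomputable def Complex.abs : AbsoluteValue ℂ ℝ := NormedField.toAbsoluteValue ℂ

lemma Complex.abs_apply' (z : ℂ) : Complex.abs z = ‖z‖ := rfl

lemma Complex.abs_conj (z : ℂ) : Complex.abs ((starRingEnd ℂ) z) = Complex.abs z := by
  simp [Complex.abs_apply']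

lemma Complex.abs_ofReal (x : ℝ) : Complex.abs (x : ℂ) = |x| := by
  simp [Complex.abs_apply']

lemma Complex.abs_intCast (k : ℤ) : Complex.abs (k : ℂ) = |(k : ℝ)| := by
  rw [Complex.abs_apply', Complex.norm_intCast]


lemma brauer_eq_one {w : ℂ} (h1 : Complex.abs w = 1) (h2 : w.re = 1) : w = 1 := by
  have h3 : w.re * w.re + w.im * w.im = 1 := by
    have := (Complex.abs_apply' w ▸ Complex.sq_norm w)
    rw [h1] at this
    simpa [Complex.normSq_apply] using this.symm
  have him : w.im = 0 := by nlinarith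
  exact Complex.ext h2 him

lemma brauer_ek (m : ℕ) (hm : 1 ≤ m) (c : ℕ → ℝ) (hc0 : 0 < c 0)
    (hinc : ∀ j, j < m → c j < c (j + 1)) (hcm : c m = 1)
    (z : ℂ) (hz : ∑ j ∈ Finset.range (m + 1), (c j : ℂ) * z ^ j = 0) :
    Complex.abs z < 1 := by
  by_contra hcon
  push_neg at hcon
  have hcmono : ∀ j, j ≤ m → c 0 ≤ c j := by
    intro j hj
    induction j with
    | zero => exact le_refl _
    | succ k ih =>
      have h1 := hinc k (by omega)
      have h2 := ih (by omega)
      linarith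
  have hcpos : ∀ j, j ≤ m → 0 < c j := fun j hj => lt_of_lt_of_le hc0 (hcmono j hj)
  have key : ∀ M : ℕ, (z - 1) * ∑ j ∈ Finset.range (M + 1), (c j : ℂ) * z ^ j
      = (c M : ℂ) * z ^ (M + 1) - (c 0 : ℂ)
        - ∑ j ∈ Finset.range M, ((c (j + 1) : ℂ) - (c j : ℂ)) * z ^ (j + 1) := by
    intro M
    induction M with
    | zero => simp; ring
    | succ k ih =>
      rw [Finset.sum_range_succ, mul_add, ih, Finset.sum_range_succ]; ring
  have hid : z ^ (m + 1)
      = (c 0 : ℂ) + ∑ j ∈ Finset.range m, ((c (j + 1) : ℂ) - (c j : ℂ)) * z ^ (j + 1) := by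
    have h := key m
    rw [hz, mul_zero, hcm] at h
    push_cast at h ⊢
    linear_combination -h
  have hd : ∀ j, j < m → (0:ℝ) ≤ c (j + 1) - c j := fun j hj => le_of_lt (sub_pos.2 (hinc j hj))
  have habs1 : (1:ℝ) ≤ Complex.abs z ^ m := by
    calc (1:ℝ) = 1 ^ m := (one_pow m).symm
      _ ≤ Complex.abs z ^ m := pow_le_pow_left₀ zero_le_one hcon m
  have h1 : Complex.abs z ^ (m + 1) ≤ Complex.abs z ^ m := by
    calc Complex.abs z ^ (m + 1) = Complex.abs (z ^ (m + 1)) := (map_pow Complex.abs z (m+1)).symm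
      _ = Complex.abs ((c 0 : ℂ) + ∑ j ∈ Finset.range m, ((c (j + 1) : ℂ) - (c j : ℂ)) * z ^ (j + 1)) := by rw [hid]
      _ ≤ Complex.abs ((c 0 : ℂ)) + ∑ j ∈ Finset.range m, Complex.abs (((c (j + 1) : ℂ) - (c j : ℂ)) * z ^ (j + 1)) := by
          refine le_trans (Complex.abs.add_le _ _) ?_
          gcongr
          exact Complex.abs.sum_le _ _
      _ ≤ c 0 * Complex.abs z ^ m + ∑ j ∈ Finset.range m, (c (j + 1) - c j) * Complex.abs z ^ m := by
          gcongr with j hj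
          · rw [Complex.abs_ofReal, abs_of_pos hc0]
            nlinarith
          · rw [map_mul, map_pow]
            have : Complex.abs ((c (j + 1) : ℂ) - (c j : ℂ)) = c (j + 1) - c j := by
              rw [← Complex.ofReal_sub, Complex.abs_ofReal, abs_of_nonneg (hd j (mem_range.1 hj))]
            rw [this]
            have hle : Complex.abs z ^ (j + 1) ≤ Complex.abs z ^ m :=
              pow_le_pow_right₀ hcon (by have := mem_range.1 hj; omega)
            exact mul_le_mul_of_nonneg_left hle (hd j (mem_range.1 hj))
      _ = Complex.abs z ^ m := by
          rw [← Finset.sum_mul, Finset.sum_range_sub c m, hcm]; ring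
  have hE : Complex.abs z = 1 := by
    have hzm : (0:ℝ) < Complex.abs z ^ m := by positivity
    rw [pow_succ] at h1
    nlinarith
  -- equality phase
  set u : ℂ := z ^ (m + 1) with hu
  have hUabs : Complex.abs u = 1 := by rw [hu, map_pow, hE, one_pow]
  have hreb : ∀ w : ℂ, Complex.abs w = 1 → ((starRingEnd ℂ) u * w).re ≤ 1 := by
    intro w hw
    calc ((starRingEnd ℂ) u * w).re ≤ Complex.abs ((starRingEnd ℂ) u * w) := Complex.re_le_norm _
      _ = 1 := by rw [map_mul, Complex.abs_conj, hUabs, hw, one_mul]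
  have hmain : (1:ℝ) = c 0 * ((starRingEnd ℂ) u).re
      + ∑ j ∈ Finset.range m, (c (j + 1) - c j) * ((starRingEnd ℂ) u * z ^ (j + 1)).re := by
    have h2 : ((starRingEnd ℂ) u * u).re = (((starRingEnd ℂ) u) * ((c 0 : ℂ)
        + ∑ j ∈ Finset.range m, ((c (j + 1) : ℂ) - (c j : ℂ)) * z ^ (j + 1))).re := by
      rw [← hid]
    have h3 : ((starRingEnd ℂ) u * u).re = 1 := by
      rw [mul_comm, Complex.mul_conj]
      simp [Complex.normSq_eq_norm_sq, ← Complex.abs_apply', hUabs]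
    rw [h3, mul_add, Finset.mul_sum] at h2
    rw [h2, Complex.add_re, Complex.re_sum]
    congr 1
    · rw [mul_comm, Complex.re_ofReal_mul]
    · refine Finset.sum_congr rfl fun j hj => ?_
      rw [show (starRingEnd ℂ) u * (((c (j + 1) : ℂ) - (c j : ℂ)) * z ^ (j + 1))
          = ((((c (j+1) - c j : ℝ)) : ℂ)) * ((starRingEnd ℂ) u * z ^ (j + 1)) by push_cast; ring,
        Complex.re_ofReal_mul]
  have hsum0 : c 0 * (1 - ((starRingEnd ℂ) u).re)
      + ∑ j ∈ Finset.range m, (c (j + 1) - c j) * (1 - ((starRingEnd ℂ) u * z ^ (j + 1)).re) = 0 := by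
    have expand : ∑ j ∈ Finset.range m, (c (j + 1) - c j) * (1 - ((starRingEnd ℂ) u * z ^ (j + 1)).re)
        = ∑ j ∈ Finset.range m, (c (j + 1) - c j)
          - ∑ j ∈ Finset.range m, (c (j + 1) - c j) * ((starRingEnd ℂ) u * z ^ (j + 1)).re := by
      rw [← Finset.sum_sub_distrib]
      refine Finset.sum_congr rfl fun j hj => ?_
      ring
    rw [expand, Finset.sum_range_sub c m, hcm]
    linarith [hmain]
  have hA : (0:ℝ) ≤ c 0 * (1 - ((starRingEnd ℂ) u).re) := by
    have := hreb ((starRingEnd ℂ) 1) (by simp)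
    have hle : ((starRingEnd ℂ) u).re ≤ 1 := by
      calc ((starRingEnd ℂ) u).re ≤ Complex.abs ((starRingEnd ℂ) u) := Complex.re_le_norm _
        _ = 1 := by rw [Complex.abs_conj, hUabs]
    nlinarith
  have hBnn : ∀ j ∈ Finset.range m, (0:ℝ) ≤ (c (j + 1) - c j) * (1 - ((starRingEnd ℂ) u * z ^ (j + 1)).re) := by
    intro j hj
    have h1 : ((starRingEnd ℂ) u * z ^ (j + 1)).re ≤ 1 := hreb _ (by rw [map_pow, hE, one_pow])
    have h2 := hd j (mem_range.1 hj)
    nlinarith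
  have hB : (0:ℝ) ≤ ∑ j ∈ Finset.range m, (c (j + 1) - c j) * (1 - ((starRingEnd ℂ) u * z ^ (j + 1)).re) :=
    Finset.sum_nonneg hBnn
  have hA0 : c 0 * (1 - ((starRingEnd ℂ) u).re) = 0 := by linarith
  have hB0 : ∑ j ∈ Finset.range m, (c (j + 1) - c j) * (1 - ((starRingEnd ℂ) u * z ^ (j + 1)).re) = 0 := by
    linarith
  have hUre : ((starRingEnd ℂ) u).re = 1 := by
    have : 1 - ((starRingEnd ℂ) u).re = 0 := by
      rcases mul_eq_zero.1 hA0 with h | h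
      · exact absurd h (ne_of_gt hc0)
      · exact h
    linarith
  have hUone : u = 1 := by
    have hcu : (starRingEnd ℂ) u = 1 :=
      brauer_eq_one (by rw [Complex.abs_conj, hUabs]) hUre
    have := congrArg (starRingEnd ℂ) hcu
    simpa using this
  have hterm := (Finset.sum_eq_zero_iff_of_nonneg hBnn).1 hB0 0 (mem_range.2 hm)
  have hzre : ((starRingEnd ℂ) u * z ^ (0 + 1)).re = 1 := by
    have hne : c (0 + 1) - c 0 ≠ 0 := ne_of_gt (sub_pos.2 (hinc 0 hm))
    rcases mul_eq_zero.1 hterm with h | h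
    · exact absurd h hne
    · linarith
  have hzone : z = 1 := by
    rw [hUone] at hzre
    simp at hzre
    exact brauer_eq_one hE (by simpa using hzre)
  rw [hzone] at hz
  simp at hz
  have hpos : (0:ℝ) < ∑ j ∈ Finset.range (m + 1), c j :=
    Finset.sum_pos (fun j hj => hcpos j (by have := mem_range.1 hj; omega)) (by simp)
  have : (∑ j ∈ Finset.range (m + 1), c j : ℝ) = 0 := by exact_mod_cast hz
  linarith

lemma brauer_prod_lt (s : Multiset ℝ) (h : ∀ x ∈ s, 0 ≤ x ∧ x ≤ 1) : s.prod ≤ 1 ∧ 0 ≤ s.prod := by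
  induction s using Multiset.induction_on with
  | empty => simp
  | cons a t ih =>
    obtain ⟨h1, h2⟩ := h a (Multiset.mem_cons_self a t)
    obtain ⟨ih1, ih2⟩ := ih (fun x hx => h x (Multiset.mem_cons_of_mem hx))
    rw [Multiset.prod_cons]
    constructor
    · nlinarith
    · positivity

lemma brauer_abs_prod (s : Multiset ℂ) : Complex.abs s.prod = (s.map Complex.abs).prod := by
  induction s using Multiset.induction_on with
  | empty => simp
  | cons a t ih => simp [Multiset.prod_cons, map_mul, ih]

theorem stmt14 (n : ℕ) (hn : 1 ≤ n) (a : ℕ → ℤ)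
    (ha0 : 0 < a 0) (hmono : ∀ i, i + 1 < n → a i ≤ a (i + 1)) :
    Irreducible (((X : Polynomial ℤ) ^ n - ∑ i ∈ Finset.range n, C (a i) * X ^ i).map
      (Int.castRingHom ℚ)) := by
  rcases eq_or_lt_of_le hn with h1 | hn2
  · -- n = 1
    have hne : n = 1 := h1.symm
    subst hne
    have : ((X : Polynomial ℤ) ^ 1 - ∑ i ∈ Finset.range 1, C (a i) * X ^ i).map
        (Int.castRingHom ℚ) = X - C ((a 0 : ℚ)) := by
      simp
    rw [this]
    exact irreducible_X_sub_C _
  -- n ≥ 2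
  set f : Polynomial ℤ := (X : Polynomial ℤ) ^ n - ∑ i ∈ Finset.range n, C (a i) * X ^ i with hfdef
  -- monotonicity facts
  have hmono' : ∀ i j, i ≤ j → j < n → a i ≤ a j := by
    intro i j hij hjn
    induction j with
    | zero =>
      have hi0 : i = 0 := by omega
      subst hi0
      exact le_refl _
    | succ k ih =>
      rcases Nat.lt_or_ge i (k+1) with h | h
      · exact le_trans (ih (by omega) (by omega)) (hmono k (by omega))
      · have : i = k + 1 := by omega
        subst this; exact le_refl _
  have hapos : ∀ i, i < n → 0 < a i := fun i hi => lt_of_lt_of_le ha0 (hmono' 0 i (by omega) hi)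
  have haposR : ∀ i, i < n → (0:ℝ) < (a i : ℝ) := fun i hi => by exact_mod_cast hapos i hi
  have ha1R : ∀ i, i < n → (1:ℝ) ≤ (a i : ℝ) := fun i hi => by
    have := hapos i hi; exact_mod_cast this
  -- the real root r
  obtain ⟨r, hr1, hrn⟩ : ∃ r : ℝ, 1 < r ∧ r ^ n = ∑ i ∈ Finset.range n, (a i : ℝ) * r ^ i := by
    set F : ℝ → ℝ := fun t => t ^ n - ∑ i ∈ Finset.range n, (a i : ℝ) * t ^ i with hFdef
    have hFcont : Continuous F := by
      apply Continuous.sub (continuous_pow n)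
      exact continuous_finset_sum _ (fun i _ => (continuous_const.mul (continuous_pow i)))
    set M : ℝ := 1 + ∑ i ∈ Finset.range n, (a i : ℝ) with hM
    have hsum1 : (n:ℝ) ≤ ∑ i ∈ Finset.range n, (a i : ℝ) := by
      calc (n:ℝ) = ∑ _i ∈ Finset.range n, (1:ℝ) := by simp
        _ ≤ _ := Finset.sum_le_sum (fun i hi => ha1R i (mem_range.1 hi))
    have hM1 : 1 < M := by
      have h2 : (1:ℝ) ≤ (n:ℝ) := by exact_mod_cast hn
      rw [hM]; linarith
    have hF1 : F 1 < 0 := by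
      simp only [hFdef, one_pow, mul_one]
      have h2 : (2:ℝ) ≤ (n:ℝ) := by exact_mod_cast hn2
      linarith
    have hFM : 0 < F M := by
      have hMpos : (0:ℝ) < M := by linarith
      have hbound : ∑ i ∈ Finset.range n, (a i : ℝ) * M ^ i
          ≤ (∑ i ∈ Finset.range n, (a i : ℝ)) * M ^ (n - 1) := by
        rw [Finset.sum_mul]
        apply Finset.sum_le_sum
        intro i hi
        have h1 : M ^ i ≤ M ^ (n - 1) :=
          pow_le_pow_right₀ (le_of_lt hM1) (by have := mem_range.1 hi; omega)
        have h2 : (0:ℝ) ≤ (a i : ℝ) := le_of_lt (haposR i (mem_range.1 hi))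
        exact mul_le_mul_of_nonneg_left h1 h2
      have hMn : M ^ n = M ^ (n - 1) * M := by
        rw [← pow_succ]
        congr 1
        omega
      have hMsum : (∑ i ∈ Finset.range n, (a i : ℝ)) = M - 1 := by rw [hM]; ring
      simp only [hFdef]
      nlinarith [pow_pos hMpos (n - 1)]
    have h0mem : (0:ℝ) ∈ Set.Ioo (F 1) (F M) := ⟨hF1, hFM⟩
    obtain ⟨r, hrmem, hFr⟩ := intermediate_value_Ioo (le_of_lt hM1) hFcont.continuousOn h0mem
    refine ⟨r, hrmem.1, ?_⟩
    have h3 : F r = 0 := hFr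
    simp only [hFdef] at h3
    linarith
  have hr0 : (0:ℝ) < r := by linarith
  have hrne : r ≠ 0 := ne_of_gt hr0
  -- the deflated coefficients
  set S : ℕ → ℝ := fun j => ∑ i ∈ Finset.range (j + 1), (a i : ℝ) * r ^ i with hSdef
  set cc : ℕ → ℝ := fun j => S j / r ^ (j + 1) with hccdef
  have hSpos : ∀ j, j < n → 0 < S j := by
    intro j hj
    apply Finset.sum_pos
    · intro i hi
      have hi' : i < n := by have := mem_range.1 hi; omega
      exact mul_pos (haposR i hi') (pow_pos hr0 i)
    · simp
  have hccpos : ∀ j, j < n → 0 < cc j := fun j hj => div_pos (hSpos j hj) (pow_pos hr0 _)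
  have hcc0 : r * cc 0 = a 0 := by
    simp only [hccdef, hSdef]
    rw [Finset.sum_range_one]
    field_simp
    ring
  have hccrec : ∀ k, r * cc (k + 1) = cc k + a (k + 1) := by
    intro k
    simp only [hccdef, hSdef]
    rw [Finset.sum_range_succ]
    field_simp
    ring
  have hcctop : cc (n - 1) = 1 := by
    simp only [hccdef, hSdef]
    have h1 : n - 1 + 1 = n := by omega
    rw [h1, ← hrn, div_self (pow_ne_zero n hrne)]
  have hccinc : ∀ j, j + 1 < n → cc j < cc (j + 1) := by
    intro j hj
    have key : (r - 1) * S j < (a (j+1) : ℝ) * r ^ (j + 1) := by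
      have hb : S j ≤ (a (j+1) : ℝ) * ∑ i ∈ Finset.range (j + 1), r ^ i := by
        rw [Finset.mul_sum]
        apply Finset.sum_le_sum
        intro i hi
        have hi' : i < n := by have := mem_range.1 hi; omega
        have := hmono' i (j+1) (by have := mem_range.1 hi; omega) hj
        have hcast : (a i : ℝ) ≤ (a (j+1) : ℝ) := by exact_mod_cast this
        exact mul_le_mul_of_nonneg_right hcast (le_of_lt (pow_pos hr0 i))
      have hg : (∑ i ∈ Finset.range (j + 1), r ^ i) * (r - 1) = r ^ (j + 1) - 1 :=
        geom_sum_mul r (j + 1)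
      have haj : (1:ℝ) ≤ (a (j+1) : ℝ) := ha1R (j+1) hj
      nlinarith [pow_pos hr0 (j+1)]
    have hS : S (j + 1) = S j + (a (j+1):ℝ) * r ^ (j+1) := by
      simp only [hSdef]; rw [Finset.sum_range_succ]
    simp only [hccdef]
    rw [div_lt_div_iff₀ (pow_pos hr0 _) (pow_pos hr0 _), hS]
    have hrp : r ^ (j + 1 + 1) = r ^ (j + 1) * r := by ring
    have hsp := hSpos j (by omega)
    nlinarith [pow_pos hr0 (j+1), pow_pos hr0 (j+2)]
  -- the factorization identity over ℝ
  clear_value S cc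
  have hkey : ∀ t : ℝ, ∀ K : ℕ, ∑ j ∈ Finset.range (K + 1),
      (cc j * t ^ (j + 1) - r * cc j * t ^ j + (a j : ℝ) * t ^ j) = cc K * t ^ (K + 1) := by
    intro t K
    induction K with
    | zero =>
      rw [Finset.sum_range_one]
      simp only [pow_zero, pow_one, mul_one]
      linarith [hcc0]
    | succ k ih =>
      rw [Finset.sum_range_succ, ih]
      linear_combination (-(t ^ (k+1)) : ℝ) * hccrec k
  have hfacR : ∀ t : ℝ, (t - r) * (∑ j ∈ Finset.range n, cc j * t ^ j)
      = t ^ n - ∑ i ∈ Finset.range n, (a i : ℝ) * t ^ i := by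
    intro t
    have h1 : n - 1 + 1 = n := by omega
    have h2 := hkey t (n - 1)
    rw [h1, hcctop, one_mul] at h2
    have h3 : ∑ j ∈ Finset.range n, (cc j * t ^ (j + 1) - r * cc j * t ^ j + (a j : ℝ) * t ^ j)
        = (t - r) * (∑ j ∈ Finset.range n, cc j * t ^ j) + ∑ i ∈ Finset.range n, (a i : ℝ) * t ^ i := by
      rw [Finset.mul_sum, ← Finset.sum_add_distrib]
      refine Finset.sum_congr rfl fun j hj => ?_
      ring
    rw [h3] at h2
    linarith [h2]
  -- polynomials over ℝ
  set Q : Polynomial ℝ := ∑ j ∈ Finset.range n, C (cc j) * X ^ j with hQdef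
  have hQeval : ∀ t : ℝ, eval t Q = ∑ j ∈ Finset.range n, cc j * t ^ j := by
    intro t; simp [hQdef, eval_finset_sum]
  have hfReval : ∀ t : ℝ, eval t (f.map (Int.castRingHom ℝ)) = t ^ n - ∑ i ∈ Finset.range n, (a i : ℝ) * t ^ i := by
    intro t
    simp [hfdef, Polynomial.map_sub, Polynomial.map_pow, Polynomial.map_sum, Polynomial.map_mul,
      Polynomial.eval_finset_sum]
  have hfQ : f.map (Int.castRingHom ℝ) = (X - C r) * Q := by
    apply Polynomial.funext
    intro t
    rw [hfReval t, eval_mul, eval_sub, eval_X, eval_C, hQeval t, hfacR t]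
  -- complex versions
  have hmapmap : ∀ p : Polynomial ℤ, p.map (Int.castRingHom ℂ)
      = (p.map (Int.castRingHom ℝ)).map Complex.ofRealHom := by
    intro p
    rw [Polynomial.map_map]
    congr 1
  have hevalRC : ∀ (p : Polynomial ℝ) (t : ℝ),
      eval (t : ℂ) (p.map Complex.ofRealHom) = ((eval t p : ℝ) : ℂ) := by
    intro p t
    rw [Polynomial.eval_map]
    exact Polynomial.eval₂_at_apply Complex.ofRealHom t
  have hfC : f.map (Int.castRingHom ℂ) = (X - C (r:ℂ)) * Q.map Complex.ofRealHom := by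
    rw [hmapmap, hfQ, Polynomial.map_mul, Polynomial.map_sub, Polynomial.map_X, Polynomial.map_C]
    rfl
  have hQCeval : ∀ z : ℂ, eval z (Q.map Complex.ofRealHom)
      = ∑ j ∈ Finset.range n, ((cc j : ℝ) : ℂ) * z ^ j := by
    intro z
    simp [hQdef, Polynomial.map_sum, Polynomial.map_mul, Polynomial.eval_finset_sum]
  -- Lemma A
  have lemA : ∀ z : ℂ, eval z (f.map (Int.castRingHom ℂ)) = 0 → z ≠ (r : ℂ) → Complex.abs z < 1 := by
    intro z hz hzr
    have h1 : (z - (r:ℂ)) * eval z (Q.map Complex.ofRealHom) = 0 := by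
      rw [hfC] at hz
      rw [eval_mul, eval_sub, eval_X, eval_C] at hz
      exact hz
    have h2 : eval z (Q.map Complex.ofRealHom) = 0 := by
      rcases mul_eq_zero.1 h1 with h | h
      · exact absurd (sub_eq_zero.1 h) hzr
      · exact h
    rw [hQCeval] at h2
    have hm1 : 1 ≤ n - 1 := by omega
    have hrange : n - 1 + 1 = n := by omega
    refine brauer_ek (n - 1) hm1 cc (hccpos 0 (by omega)) (fun j hj => hccinc j (by omega))
      hcctop z ?_
    rw [hrange]
    exact h2
    -- eval at 0 of f
  have hf0 : eval 0 f = -(a 0) := by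
    simp only [hfdef, eval_sub, eval_pow, eval_X, eval_finset_sum, eval_mul, eval_C]
    rw [zero_pow (by omega : n ≠ 0)]
    rw [Finset.sum_eq_single 0]
    · simp
    · intro i _hi hine
      rw [zero_pow hine]; ring
    · intro hnot
      exact absurd (mem_range.2 (by omega)) hnot
  -- degree facts
  have hdegsum : (∑ i ∈ Finset.range n, C (a i) * X ^ i).degree ≤ ((n - 1 : ℕ) : WithBot ℕ) := by
    refine (Polynomial.degree_sum_le _ _).trans ?_
    refine Finset.sup_le fun i hi => ?_
    refine (Polynomial.degree_C_mul_X_pow_le _ _).trans ?_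
    have hi' : i ≤ n - 1 := by have := mem_range.1 hi; omega
    exact_mod_cast hi'
  have hdeglt : (∑ i ∈ Finset.range n, C (a i) * X ^ i).degree < ((n : ℕ) : WithBot ℕ) := by
    refine lt_of_le_of_lt hdegsum ?_
    exact_mod_cast (by omega : n - 1 < n)
  have hfmonic : f.Monic := by
    rw [hfdef]
    exact Polynomial.monic_X_pow_sub hdeglt
  have hfnat : f.natDegree = n := by
    have hlt : (∑ i ∈ Finset.range n, C (a i) * X ^ i).degree < (X ^ n : Polynomial ℤ).degree := by
      rw [Polynomial.degree_X_pow]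
      exact hdeglt
    have hdeg := Polynomial.degree_sub_eq_left_of_degree_lt hlt
    rw [Polynomial.degree_X_pow] at hdeg
    exact Polynomial.natDegree_eq_of_degree_eq_some (hfdef ▸ hdeg)
  -- Lemma B
  have lemB : ∀ p : Polynomial ℤ, p.Monic → 0 < p.natDegree → p ∣ f →
      (p.map (Int.castRingHom ℝ)).IsRoot r := by
    intro p hpm hpd hpf
    have hp0 : eval 0 p ≠ 0 := by
      intro h0
      obtain ⟨k, hk⟩ := hpf
      have : (-(a 0) : ℤ) = 0 := by rw [← hf0, hk, eval_mul, h0, zero_mul]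
      omega
    set pC := p.map (Int.castRingHom ℂ) with hpC
    have hpCm : pC.Monic := hpm.map _
    have hpCdeg : pC.natDegree = p.natDegree := hpm.natDegree_map _
    have hsplit : Splits pC := IsAlgClosed.splits pC
    have hprod : pC = (pC.roots.map fun z => X - C z).prod :=
      hsplit.eq_prod_roots_of_monic hpCm
    have hcard : pC.roots.card = p.natDegree := by
      rw [(Polynomial.splits_iff_card_roots).1 hsplit, hpCdeg]
    have hrootf : ∀ z ∈ pC.roots, eval z (f.map (Int.castRingHom ℂ)) = 0 := by
      intro z hz
      obtain ⟨k, hk⟩ := hpf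
      have hz0 : eval z pC = 0 := Polynomial.isRoot_of_mem_roots hz
      rw [hk, Polynomial.map_mul, eval_mul, ← hpC, hz0, zero_mul]
    have hex : ∃ z ∈ pC.roots, (1:ℝ) ≤ Complex.abs z := by
      by_contra hco
      push_neg at hco
      have hne0 : pC.roots ≠ 0 := by
        intro hroots0
        rw [hroots0] at hcard
        simp at hcard
        omega
      have h0C : Complex.abs (eval 0 pC) = (pC.roots.map Complex.abs).prod := by
        conv_lhs => rw [hprod]
        rw [Polynomial.eval_multiset_prod, Multiset.map_map, brauer_abs_prod, Multiset.map_map]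
        congr 1
        refine Multiset.map_congr rfl fun z _hz => ?_
        simp
      have hge : (1:ℝ) ≤ Complex.abs (eval 0 pC) := by
        have hev : eval (0:ℂ) pC = ((eval 0 p : ℤ) : ℂ) := by
          rw [hpC, Polynomial.eval_map]
          have := Polynomial.eval₂_at_apply (p := p) (Int.castRingHom ℂ) 0
          simpa using this
        rw [hev, Complex.abs_intCast]
        have h1 : (1:ℤ) ≤ |eval 0 p| := Int.one_le_abs hp0
        exact_mod_cast h1
      have hlt1 : (pC.roots.map Complex.abs).prod < 1 := by
        obtain ⟨z0, hz0mem⟩ := Multiset.exists_mem_of_ne_zero hne0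
        have hcons : pC.roots = z0 ::ₘ pC.roots.erase z0 := (Multiset.cons_erase hz0mem).symm
        rw [hcons, Multiset.map_cons, Multiset.prod_cons]
        have hrest := brauer_prod_lt ((pC.roots.erase z0).map Complex.abs) (by
          intro x hx
          obtain ⟨z, hz, rfl⟩ := Multiset.mem_map.1 hx
          have hzmem : z ∈ pC.roots := Multiset.mem_of_mem_erase hz
          exact ⟨Complex.abs.nonneg z, le_of_lt (hco z hzmem)⟩)
        have hz0lt := hco z0 hz0mem
        have habs0 : (0:ℝ) ≤ Complex.abs z0 := Complex.abs.nonneg z0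
        nlinarith [hrest.1, hrest.2]
      rw [h0C] at hge
      linarith
    obtain ⟨z0, hz0mem, hz0abs⟩ := hex
    have hz0r : z0 = (r:ℂ) := by
      by_contra hne
      have := lemA z0 (hrootf z0 hz0mem) hne
      linarith
    have hevr : eval ((r:ℝ):ℂ) pC = 0 := by
      rw [← hz0r]
      exact Polynomial.isRoot_of_mem_roots hz0mem
    have h2 : eval ((r:ℝ):ℂ) ((p.map (Int.castRingHom ℝ)).map Complex.ofRealHom) = 0 := by
      rw [← hmapmap]
      exact hevr
    rw [hevalRC] at h2
    exact_mod_cast h2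
  -- core contradiction
  have core : ∀ g h : Polynomial ℤ, f = g * h → g.Monic → h.Monic →
      0 < g.natDegree → 0 < h.natDegree → False := by
    intro g h hgh hgm hhm hgd hhd
    have hg := lemB g hgm hgd ⟨h, hgh⟩
    have hh := lemB h hhm hhd ⟨g, by rw [hgh, mul_comm]⟩
    obtain ⟨g1, hg1⟩ := (Polynomial.dvd_iff_isRoot).2 hg
    obtain ⟨h1, hh1⟩ := (Polynomial.dvd_iff_isRoot).2 hh
    have hfR2 : (X - C r) * Q = (X - C r) * ((X - C r) * (g1 * h1)) := by
      rw [← hfQ, hgh, Polynomial.map_mul, hg1, hh1]; ring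
    have hQd : Q = (X - C r) * (g1 * h1) :=
      mul_left_cancel₀ (Polynomial.X_sub_C_ne_zero r) hfR2
    have hQr0 : eval r Q = 0 := by
      rw [hQd, eval_mul, eval_sub, eval_X, eval_C, sub_self, zero_mul]
    rw [hQeval] at hQr0
    have hQpos : 0 < ∑ j ∈ Finset.range n, cc j * r ^ j :=
      Finset.sum_pos (fun j hj => mul_pos (hccpos j (mem_range.1 hj)) (pow_pos hr0 j))
        ⟨0, mem_range.2 (by omega)⟩
    linarith
  -- assembly
  have hprim : f.IsPrimitive := hfmonic.isPrimitive
  rw [← Polynomial.IsPrimitive.Int.irreducible_iff_irreducible_map_cast hprim]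
  constructor
  · intro hu
    have := Polynomial.natDegree_eq_zero_of_isUnit hu
    omega
  · intro g h hgh
    by_contra hcon
    push_neg at hcon
    obtain ⟨hgu, hhu⟩ := hcon
    have hlc : g.leadingCoeff * h.leadingCoeff = 1 := by
      have hm1 : f.leadingCoeff = 1 := hfmonic
      rw [hgh, Polynomial.leadingCoeff_mul] at hm1
      exact hm1
    have hdeg1 : ∀ k : Polynomial ℤ, k.Monic → ¬IsUnit k → 0 < k.natDegree := by
      intro k hkm hku
      rcases Nat.eq_zero_or_pos k.natDegree with h0 | h0
      · exact absurd ((Polynomial.Monic.natDegree_eq_zero hkm).1 h0 ▸ isUnit_one) hku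
      · exact h0
    rcases Int.mul_eq_one_iff_eq_one_or_neg_one.1 hlc with ⟨h1, h2⟩ | ⟨h1, h2⟩
    · have hgm : g.Monic := h1
      have hhm : h.Monic := h2
      exact core g h hgh hgm hhm (hdeg1 g hgm hgu) (hdeg1 h hhm hhu)
    · have hgm : (-g).Monic := by
        have : (-g).leadingCoeff = 1 := by rw [Polynomial.leadingCoeff_neg, h1]; ring
        exact this
      have hhm : (-h).Monic := by
        have : (-h).leadingCoeff = 1 := by rw [Polynomial.leadingCoeff_neg, h2]; ring
        exact this
      have hgu' : ¬IsUnit (-g) := fun hu => hgu (by simpa using hu.neg)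
      have hhu' : ¬IsUnit (-h) := fun hu => hhu (by simpa using hu.neg)
      have hgd := hdeg1 (-g) hgm hgu'
      have hhd := hdeg1 (-h) hhm hhu'
      rw [Polynomial.natDegree_neg] at hgd hhd
      exact core (-g) (-h) (by rw [hgh]; ring) hgm hhm
        (by rw [Polynomial.natDegree_neg]; exact hgd) (by rw [Polynomial.natDegree_neg]; exact hhd)
end

section
/- Let p be a prime, define f_1(x) = p·x + 1 and f_n(x) = x·f_{n−1}(x) + 1 for n ≥ 2. Then f_n(x) = p·x^n + x^{n−1} + x^{n−2} + ... + x + 1, and every f_n is irreducible over ℚ. -/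
open Polynomial Finset

private lemma aux_prod_le_one (s : Multiset ℝ) (h0 : ∀ x ∈ s, 0 ≤ x) (h1 : ∀ x ∈ s, x ≤ 1) :
    0 ≤ s.prod ∧ s.prod ≤ 1 := by
  induction s using Multiset.induction_on with
  | empty => simp
  | cons x t ih =>
    have hx0 : 0 ≤ x := h0 x (Multiset.mem_cons_self _ _)
    have hx1 : x ≤ 1 := h1 x (Multiset.mem_cons_self _ _)
    have ht := ih (fun y hy => h0 y (Multiset.mem_cons_of_mem hy))
      (fun y hy => h1 y (Multiset.mem_cons_of_mem hy))
    rw [Multiset.prod_cons]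
    constructor
    · exact mul_nonneg hx0 ht.1
    · calc x * t.prod ≤ 1 * 1 := by
            apply mul_le_mul hx1 ht.2 ht.1 zero_le_one
      _ = 1 := by ring

private lemma aux_prod_lt_one (s : Multiset ℝ) (hs : s ≠ 0) (h0 : ∀ x ∈ s, 0 ≤ x)
    (h1 : ∀ x ∈ s, x < 1) : s.prod < 1 := by
  obtain ⟨x, hx⟩ := Multiset.exists_mem_of_ne_zero hs
  obtain ⟨t, rfl⟩ := Multiset.exists_cons_of_mem hx
  have hx0 : 0 ≤ x := h0 x (Multiset.mem_cons_self _ _)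
  have hx1 : x < 1 := h1 x (Multiset.mem_cons_self _ _)
  have ht := aux_prod_le_one t (fun y hy => h0 y (Multiset.mem_cons_of_mem hy))
    (fun y hy => le_of_lt (h1 y (Multiset.mem_cons_of_mem hy)))
  rw [Multiset.prod_cons]
  calc x * t.prod ≤ x * 1 := mul_le_mul_of_nonneg_left ht.2 hx0
    _ = x := mul_one x
    _ < 1 := hx1

/-- the key complex-analytic fact: a root of `p z^n (z-1) + z^n - 1` with `|z| ≥ 1` must be 1 -/
private lemma aux_root_eq_one (p : ℕ) (hp : 2 ≤ p) (n : ℕ) (z : ℂ)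
    (h : (p : ℂ) * z ^ n * (z - 1) + z ^ n - 1 = 0) (habs : 1 ≤ ‖z‖) : z = 1 := by
  have key : z ^ n * ((p : ℂ) * z - ((p : ℂ) - 1)) = 1 := by linear_combination h
  have h2 : (‖z‖) ^ n * ‖((p : ℂ) * z - ((p : ℂ) - 1))‖ = 1 := by
    rw [← norm_pow, ← norm_mul, key, norm_one]
  have h3 : (1 : ℝ) ≤ (‖z‖) ^ n := one_le_pow₀ habs
  have h4 : ‖((p : ℂ) * z - ((p : ℂ) - 1))‖ ≤ 1 := by
    nlinarith [norm_nonneg ((p : ℂ) * z - ((p : ℂ) - 1))]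
  set a := z.re with ha_def
  set b := z.im with hb_def
  have hp' : (2 : ℝ) ≤ (p : ℝ) := by exact_mod_cast hp
  have hsum : (1 : ℝ) ≤ a ^ 2 + b ^ 2 := by
    have : (1 : ℝ) ≤ (‖z‖) ^ 2 := by nlinarith
    rw [Complex.sq_norm, Complex.normSq_apply] at this
    nlinarith [this]
  have h5 : ((p : ℝ) * a - ((p : ℝ) - 1)) ^ 2 + ((p : ℝ) * b) ^ 2 ≤ 1 := by
    have hsq : (‖((p : ℂ) * z - ((p : ℂ) - 1))‖) ^ 2 ≤ 1 := by
      nlinarith [norm_nonneg ((p : ℂ) * z - ((p : ℂ) - 1))]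
    rw [Complex.sq_norm, Complex.normSq_apply] at hsq
    have hre : ((p : ℂ) * z - ((p : ℂ) - 1)).re = (p : ℝ) * a - ((p : ℝ) - 1) := by
      simp [Complex.sub_re, Complex.mul_re, ha_def]
    have him : ((p : ℂ) * z - ((p : ℂ) - 1)).im = (p : ℝ) * b := by
      simp [Complex.sub_im, Complex.mul_im, hb_def]
    rw [hre, him] at hsq
    nlinarith [hsq]
  have ha1 : 1 ≤ a := by
    nlinarith [mul_le_mul_of_nonneg_left hsum (by positivity : (0:ℝ) ≤ (p:ℝ)^2),
      mul_pos (by linarith : (0:ℝ) < (p:ℝ)) (by linarith : (0:ℝ) < (p:ℝ) - 1)]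
  have ha2 : a ≤ 1 := by
    have hX : (p : ℝ) * a - ((p : ℝ) - 1) ≤ 1 := by
      nlinarith [sq_nonneg ((p : ℝ) * b)]
    nlinarith
  have ha : a = 1 := le_antisymm ha2 ha1
  have hb : b = 0 := by
    rw [ha] at h5
    have hpb : ((p : ℝ) * b) ^ 2 ≤ 0 := by nlinarith
    have hpb0 : (p : ℝ) * b = 0 := by
      have := le_antisymm hpb (sq_nonneg _)
      exact sq_eq_zero_iff.mp this
    rcases mul_eq_zero.mp hpb0 with h | h
    · exfalso; linarith
    · exact h
  apply Complex.ext
  · rw [← ha_def, ha]; simp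
  · rw [← hb_def, hb]; simp

/-- if all complex roots of an integer polynomial have modulus < 1, then
`|coeff 0| < |leadingCoeff|` -/
private lemma aux_coeff_lt (a : Polynomial ℤ) (ha : a ≠ 0) (hd : 1 ≤ a.natDegree)
    (hr : ∀ z : ℂ, (a.map (Int.castRingHom ℂ)).eval z = 0 → ‖z‖ < 1) :
    |a.coeff 0| < |a.leadingCoeff| := by
  set A := a.map (Int.castRingHom ℂ) with hA
  have hinj : Function.Injective (Int.castRingHom ℂ) := Int.cast_injective
  have hA0 : A ≠ 0 := (Polynomial.map_ne_zero_iff hinj).mpr ha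
  have hs : Splits A := IsAlgClosed.splits A
  have hdegA : A.natDegree = a.natDegree := natDegree_map_eq_of_injective hinj a
  have hcard : Multiset.card A.roots = A.natDegree := splits_iff_card_roots.mp hs
  have heq : A = C A.leadingCoeff * (Multiset.map (fun r => X - C r) A.roots).prod :=
    hs.eq_prod_roots
  have heval : A.eval 0 = A.leadingCoeff * (Multiset.map (fun r => -r) A.roots).prod := by
    conv_lhs => rw [heq]
    rw [eval_mul, eval_C, eval_multiset_prod, Multiset.map_map]
    congr 1
    congr 1
    ext r
    simp
  have habs : ‖(A.eval 0)‖ =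
      ‖A.leadingCoeff‖ * (Multiset.map (fun r => ‖(-r)‖) A.roots).prod := by
    rw [heval, norm_mul, ← normHom_apply (α := ℂ) (Multiset.map (fun r => -r) A.roots).prod,
      map_multiset_prod, Multiset.map_map]
    rfl
  have hlt : (Multiset.map (fun r => ‖(-r)‖) A.roots).prod < 1 := by
    apply aux_prod_lt_one
    · intro hcon
      rw [Multiset.map_eq_zero] at hcon
      rw [hcon] at hcard
      simp [hdegA] at hcard
      omega
    · intro x hx
      obtain ⟨r, _, rfl⟩ := Multiset.mem_map.mp hx
      exact norm_nonneg _
    · intro x hx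
      obtain ⟨r, hrmem, rfl⟩ := Multiset.mem_map.mp hx
      rw [norm_neg]
      exact hr r ((Polynomial.mem_roots hA0).mp hrmem)
  have hleadA : A.leadingCoeff = ((a.leadingCoeff : ℤ) : ℂ) := by
    rw [hA, leadingCoeff_map_of_injective hinj]; rfl
  have hevalA : A.eval 0 = ((a.coeff 0 : ℤ) : ℂ) := by
    rw [hA, eval_map]
    rw [eval₂_at_zero]
    rfl
  have hlead_ne : a.leadingCoeff ≠ 0 := leadingCoeff_ne_zero.mpr ha
  have hlead_pos : (0 : ℝ) < ‖A.leadingCoeff‖ := by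
    rw [hleadA]
    apply norm_pos_iff.mpr
    exact_mod_cast hlead_ne
  have hfinal : ‖(A.eval 0)‖ < ‖A.leadingCoeff‖ := by
    rw [habs]
    calc ‖A.leadingCoeff‖ * (Multiset.map (fun r => ‖(-r)‖) A.roots).prod
        < ‖A.leadingCoeff‖ * 1 := by
          apply mul_lt_mul_of_pos_left hlt hlead_pos
      _ = ‖A.leadingCoeff‖ := mul_one _
  rw [hevalA, hleadA] at hfinal
  have h1 : ‖((a.coeff 0 : ℤ) : ℂ)‖ = ((|a.coeff 0| : ℤ) : ℝ) := by
    rw [Complex.norm_intCast]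
    push_cast
    rfl
  have h2 : ‖((a.leadingCoeff : ℤ) : ℂ)‖ = ((|a.leadingCoeff| : ℤ) : ℝ) := by
    rw [Complex.norm_intCast]
    push_cast
    rfl
  rw [h1, h2] at hfinal
  exact_mod_cast hfinal

theorem stmt16 (p : ℕ) (hp : p.Prime) (f : ℕ → Polynomial ℤ)
    (hf1 : f 1 = C (p : ℤ) * X + 1)
    (hrec : ∀ n, 2 ≤ n → f n = X * f (n - 1) + 1) :
    ∀ n, 1 ≤ n →
      f n = C (p : ℤ) * X ^ n + ∑ i ∈ Finset.range n, X ^ i ∧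
      Irreducible ((f n).map (Int.castRingHom ℚ)) := by
  have hp2 : 2 ≤ p := hp.two_le
  -- the explicit formula
  have hform : ∀ n, 1 ≤ n → f n = C (p : ℤ) * X ^ n + ∑ i ∈ Finset.range n, X ^ i := by
    intro n hn
    induction n with
    | zero => omega
    | succ m ih =>
      rcases Nat.lt_or_ge m 1 with hm | hm
      · interval_cases m
        simpa using hf1
      · have h2 : 2 ≤ m + 1 := by omega
        rw [hrec (m + 1) h2]
        simp only [Nat.add_sub_cancel]
        rw [ih hm, geom_sum_succ]
        ring
    -- formula facts
  intro n hn
  refine ⟨hform n hn, ?_⟩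
  set F : Polynomial ℤ := C (p : ℤ) * X ^ n + ∑ i ∈ Finset.range n, X ^ i with hF
  rw [hform n hn]
  have hpZ : ((p : ℤ)) ≠ 0 := by exact_mod_cast hp.ne_zero
  have hcoeff0 : F.coeff 0 = 1 := by
    rw [hF]
    rw [coeff_add, coeff_C_mul, coeff_X_pow, finset_sum_coeff]
    simp only [coeff_X_pow]
    rw [if_neg (by omega : ¬ (0:ℕ) = n), Finset.sum_ite_eq (Finset.range n) 0 (fun _ => (1:ℤ))]
    simp [Finset.mem_range]
    omega
  have hcoeffn : F.coeff n = (p : ℤ) := by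
    rw [hF]
    rw [coeff_add, coeff_C_mul, coeff_X_pow, finset_sum_coeff]
    simp only [coeff_X_pow]
    rw [Finset.sum_ite_eq (Finset.range n) n (fun _ => (1:ℤ))]
    simp [Finset.mem_range]
  have hdegle : F.degree ≤ n := by
    rw [hF]
    apply le_trans (degree_add_le _ _)
    apply max_le
    · apply le_trans (degree_mul_le _ _)
      rw [degree_C hpZ, degree_X_pow, zero_add]
    · apply le_trans (degree_sum_le _ _)
      apply Finset.sup_le
      intro i hi
      rw [degree_X_pow]
      exact_mod_cast le_of_lt (by exact_mod_cast Finset.mem_range.mp hi : (i:ℕ) < n)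
  have hFne : F ≠ 0 := fun h => by simp [h] at hcoeff0
  have hnatdeg : F.natDegree = n := by
    apply le_antisymm (natDegree_le_iff_degree_le.mpr hdegle)
    apply le_natDegree_of_ne_zero
    rw [hcoeffn]; exact hpZ
  have hlead : F.leadingCoeff = (p : ℤ) := by
    rw [leadingCoeff, hnatdeg, hcoeffn]
  -- every complex root of F has modulus < 1
  have hroots : ∀ z : ℂ, (F.map (Int.castRingHom ℂ)).eval z = 0 → ‖z‖ < 1 := by
    intro z hz
    have hev : (p : ℂ) * z ^ n + ∑ i ∈ Finset.range n, z ^ i = 0 := by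
      rw [hF] at hz
      simp only [Polynomial.map_add, Polynomial.map_mul, Polynomial.map_pow, Polynomial.map_C,
        Polynomial.map_X, Polynomial.map_sum, eval_add, eval_mul, eval_pow, eval_C, eval_X,
        eval_finset_sum] at hz
      convert hz using 2; simp
    by_contra hcon
    push_neg at hcon
    have heq1 : (p : ℂ) * z ^ n * (z - 1) + z ^ n - 1 = 0 := by
      have gs := geom_sum_mul z n
      linear_combination (z - 1) * hev - gs
    have hz1 : z = 1 := aux_root_eq_one p hp2 n z heq1 hcon
    rw [hz1] at hev
    simp at hev
    have : (p : ℂ) + n = 0 := by linear_combination hev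
    have : ((p + n : ℕ) : ℂ) = 0 := by push_cast; linear_combination this
    have : p + n = 0 := by exact_mod_cast this
    omega
  -- F is irreducible over ℤ
  have hirr : Irreducible F := by
    constructor
    · intro hu
      have := natDegree_eq_zero_of_isUnit hu
      omega
    · intro a b hab
      have hc0 : a.coeff 0 * b.coeff 0 = 1 := by
        rw [← mul_coeff_zero, ← hab, hcoeff0]
      by_cases hda : a.natDegree = 0
      · left
        rw [eq_C_of_natDegree_eq_zero hda]
        exact isUnit_C.mpr (IsUnit.of_mul_eq_one _ hc0)
      by_cases hdb : b.natDegree = 0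
      · right
        rw [eq_C_of_natDegree_eq_zero hdb]
        exact isUnit_C.mpr (IsUnit.of_mul_eq_one _ (by linarith [mul_comm (a.coeff 0) (b.coeff 0)] : b.coeff 0 * a.coeff 0 = 1))
      exfalso
      have hane : a ≠ 0 := fun h => by simp [h] at hab; exact hFne hab
      have hbne : b ≠ 0 := fun h => by simp [h] at hab; exact hFne hab
      have hra : ∀ z : ℂ, (a.map (Int.castRingHom ℂ)).eval z = 0 → ‖z‖ < 1 := by
        intro z hz
        apply hroots
        rw [hab, Polynomial.map_mul, eval_mul, hz, zero_mul]
      have hrb : ∀ z : ℂ, (b.map (Int.castRingHom ℂ)).eval z = 0 → ‖z‖ < 1 := by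
        intro z hz
        apply hroots
        rw [hab, Polynomial.map_mul, eval_mul, hz, mul_zero]
      have hba := aux_coeff_lt a hane (by omega) hra
      have hbb := aux_coeff_lt b hbne (by omega) hrb
      have habs_a : |a.coeff 0| = 1 := by
        rcases Int.isUnit_iff.mp (IsUnit.of_mul_eq_one _ hc0) with h | h <;> rw [h] <;> rfl
      have habs_b : |b.coeff 0| = 1 := by
        have hc0' : b.coeff 0 * a.coeff 0 = 1 := by linarith [mul_comm (a.coeff 0) (b.coeff 0)]
        rcases Int.isUnit_iff.mp (IsUnit.of_mul_eq_one _ hc0') with h | h <;> rw [h] <;> rfl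
      rw [habs_a] at hba
      rw [habs_b] at hbb
      have hleadmul : a.leadingCoeff * b.leadingCoeff = (p : ℤ) := by
        rw [← leadingCoeff_mul, ← hab, hlead]
      have h2a : 2 ≤ |a.leadingCoeff| := by omega
      have h2b : 2 ≤ |b.leadingCoeff| := by omega
      have habsmul : |a.leadingCoeff| * |b.leadingCoeff| = (p : ℤ) := by
        rw [← abs_mul, hleadmul]
        exact abs_of_nonneg (by positivity)
      set u := a.leadingCoeff.natAbs with hu
      set v := b.leadingCoeff.natAbs with hv
      have huv : u * v = p := by
        have := habsmul
        rw [Int.abs_eq_natAbs, Int.abs_eq_natAbs] at this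
        exact_mod_cast this
      have hu2 : 2 ≤ u := by
        rw [Int.abs_eq_natAbs] at h2a; exact_mod_cast h2a
      have hv2 : 2 ≤ v := by
        rw [Int.abs_eq_natAbs] at h2b; exact_mod_cast h2b
      have hdvd : u ∣ p := ⟨v, huv.symm⟩
      rcases (hp.eq_one_or_self_of_dvd u hdvd) with h | h
      · omega
      · rw [h] at huv
        have hv1 : v = 1 := Nat.eq_of_mul_eq_mul_left (by omega : 0 < p)
          (by rw [mul_one]; exact huv)
        omega
  -- transfer to ℚ via Gauss's lemma
  have hprim : F.IsPrimitive := by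
    intro r hr
    have := (C_dvd_iff_dvd_coeff r F).mp hr 0
    rw [hcoeff0] at this
    exact isUnit_of_dvd_one this
  exact (Polynomial.IsPrimitive.Int.irreducible_iff_irreducible_map_cast hprim).mp hirr
end

section
/- For every positive integer k there exist infinitely many polynomial Cunningham chains of the second kind of length exactly k: i.e., infinitely many f_1 ∈ ℤ[x] with positive leading coefficient such that, setting f_n(x) = x·f_{n−1}(x) − 1, the polynomials f_1, ..., f_k are irreducible over ℚ and f_{k+1} is reducible over ℚ. -/
open Polynomial

noncomputable def ccFF (k p n : ℕ) : Polynomial ℤ :=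
  C (p:ℤ) * X^n + C ((k:ℤ) - p) * X^(n-1) - ∑ j ∈ Finset.range (n-1), X^j


lemma ccFF_one (k p : ℕ) : ccFF k p 1 = C (p:ℤ) * X + C ((k:ℤ) - p) := by
  simp [ccFF]

lemma ccFF_step (k p n : ℕ) (hn : 1 ≤ n) :
    ccFF k p (n+1) = X * ccFF k p n - 1 := by
  obtain ⟨m, rfl⟩ : ∃ m, n = m + 1 := ⟨n-1, (Nat.succ_pred_eq_of_pos hn).symm⟩
  simp only [ccFF, Nat.add_sub_cancel, Nat.succ_sub_one]
  rw [Finset.sum_range_succ']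
  rw [mul_sub, mul_add, Finset.mul_sum]
  simp_rw [← pow_succ']
  ring

lemma ccFF_chain (k p : ℕ) (f : ℕ → Polynomial ℤ) (h1 : f 1 = ccFF k p 1)
    (hrec : ∀ n, 2 ≤ n → f n = X * f (n - 1) - 1) :
    ∀ n, 1 ≤ n → f n = ccFF k p n := by
  intro n hn
  induction n, hn using Nat.le_induction with
  | base => exact h1
  | succ n hn ih =>
      rw [hrec (n+1) (by omega)]
      simp only [Nat.add_sub_cancel]
      rw [ih]
      exact (ccFF_step k p n hn).symm
-- degree facts
lemma ccFF_lower_degree_lt (k p n : ℕ) (hn : 1 ≤ n) :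
    degree (C ((k:ℤ) - p) * X^(n-1) - ∑ j ∈ Finset.range (n-1), X^j) < n := by
  apply lt_of_le_of_lt (degree_sub_le _ _)
  rw [max_lt_iff]
  constructor
  · exact lt_of_le_of_lt (degree_C_mul_X_pow_le _ _) (by exact_mod_cast Nat.sub_lt hn one_pos)
  · apply lt_of_le_of_lt (degree_sum_le _ _)
    apply Finset.sup_lt_iff (WithBot.bot_lt_coe n) |>.mpr
    intro j hj
    refine lt_of_le_of_lt (degree_X_pow_le j) ?_
    have hjn : j < n := lt_of_lt_of_le (Finset.mem_range.mp hj) (by omega)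
    exact Nat.cast_lt.mpr hjn

lemma ccFF_eq (k p n : ℕ) : ccFF k p n =
    C (p:ℤ) * X^n + (C ((k:ℤ) - p) * X^(n-1) - ∑ j ∈ Finset.range (n-1), X^j) := by
  unfold ccFF; ring

lemma ccFF_degree (k p n : ℕ) (hn : 1 ≤ n) (hp : p ≠ 0) : degree (ccFF k p n) = n := by
  rw [ccFF_eq, degree_add_eq_left_of_degree_lt, degree_C_mul_X_pow]
  · exact_mod_cast hp
  · rw [degree_C_mul_X_pow _ (by exact_mod_cast hp : ((p:ℤ) ≠ 0))]
    exact ccFF_lower_degree_lt k p n hn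

lemma ccFF_natDegree (k p n : ℕ) (hn : 1 ≤ n) (hp : p ≠ 0) : natDegree (ccFF k p n) = n :=
  natDegree_eq_of_degree_eq_some (ccFF_degree k p n hn hp)

lemma ccFF_ne_zero (k p n : ℕ) (hn : 1 ≤ n) (hp : p ≠ 0) : ccFF k p n ≠ 0 := by
  intro h
  have := ccFF_degree k p n hn hp
  rw [h, degree_zero] at this
  exact (by simp : ¬ (⊥ : WithBot ℕ) = (n:WithBot ℕ)) this

lemma ccFF_leadingCoeff (k p n : ℕ) (hn : 1 ≤ n) (hp : p ≠ 0) :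
    leadingCoeff (ccFF k p n) = (p:ℤ) := by
  rw [leadingCoeff, ccFF_natDegree k p n hn hp, ccFF_eq, coeff_add, coeff_C_mul, coeff_X_pow,
    if_pos rfl, coeff_eq_zero_of_degree_lt (ccFF_lower_degree_lt k p n hn), mul_one, add_zero]

lemma ccFF_coeff_zero (k p n : ℕ) (hn : 2 ≤ n) : (ccFF k p n).coeff 0 = -1 := by
  unfold ccFF
  rw [coeff_sub, coeff_add, coeff_C_mul, coeff_C_mul, coeff_X_pow, coeff_X_pow,
    if_neg (by omega), if_neg (by omega), finset_sum_coeff]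
  simp only [coeff_X_pow]
  rw [Finset.sum_ite_eq (Finset.range (n-1)) 0 (fun _ => (1:ℤ))]
  simp only [Finset.mem_range, if_pos (by omega : 0 < n - 1)]
  ring

lemma ccFF_eval_one (k p : ℕ) : eval 1 (ccFF k p (k+1)) = 0 := by
  unfold ccFF
  simp [eval_finset_sum]

lemma cc_ms_nonneg (s : Multiset ℝ) (h : ∀ x ∈ s, 0 ≤ x) : 0 ≤ s.prod := by
  induction s using Multiset.induction_on with
  | empty => simp
  | cons a t ih =>
      rw [Multiset.prod_cons]
      exact mul_nonneg (h a (Multiset.mem_cons_self a t))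
        (ih fun x hx => h x (Multiset.mem_cons_of_mem hx))

lemma cc_ms_le_one (s : Multiset ℝ) (h : ∀ x ∈ s, 0 ≤ x ∧ x ≤ 1) : s.prod ≤ 1 := by
  induction s using Multiset.induction_on with
  | empty => simp
  | cons a t ih =>
      rw [Multiset.prod_cons]
      have ha := h a (Multiset.mem_cons_self a t)
      have ht : ∀ x ∈ t, 0 ≤ x ∧ x ≤ 1 := fun x hx => h x (Multiset.mem_cons_of_mem hx)
      have h1 := ih ht
      have h2 := cc_ms_nonneg t (fun x hx => (ht x hx).1)
      nlinarith [ha.1, ha.2]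

lemma ccFF_root_bound (k p n : ℕ) (hn : 1 ≤ n) (hnk : n ≤ k) (hkp : k < p) (z : ℂ)
    (hz : eval z ((ccFF k p n).map (Int.castRingHom ℂ)) = 0) : ‖z‖ < 1 := by
  have hz' : (p:ℂ) * z^n + ((k:ℂ) - p) * z^(n-1) - ∑ j ∈ Finset.range (n-1), z^j = 0 := by
    rw [ccFF] at hz
    simpa [Polynomial.map_sum, eval_finset_sum] using hz
  have key : (p:ℂ) * z^n = ((p:ℂ) - k) * z^(n-1) + ∑ j ∈ Finset.range (n-1), z^j := by
    linear_combination hz'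
  by_contra hcon
  push_neg at hcon
  set r := ‖z‖ with hr
  have hr1 : 1 ≤ r := hcon
  have hrpos : (0:ℝ) < r ^ (n-1) := pow_pos (lt_of_lt_of_le one_pos hr1) _
  have h2 : ‖((p:ℂ) - k) * z^(n-1)‖ = ((p:ℝ) - k) * r^(n-1) := by
    rw [norm_mul, norm_pow]
    congr 1
    have : ((p:ℂ) - k) = (((p:ℝ) - k : ℝ) : ℂ) := by push_cast; ring
    rw [this, Complex.norm_real, Real.norm_eq_abs, abs_of_nonneg]
    have : (k:ℝ) < p := by exact_mod_cast hkp
    linarith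
  have h3 : ‖∑ j ∈ Finset.range (n-1), z^j‖ ≤ ((n-1 : ℕ):ℝ) * r^(n-1) := by
    calc ‖∑ j ∈ Finset.range (n-1), z^j‖
        ≤ ∑ j ∈ Finset.range (n-1), ‖z^j‖ := norm_sum_le _ _
      _ ≤ ∑ _j ∈ Finset.range (n-1), r^(n-1) := by
          apply Finset.sum_le_sum
          intro j hj
          rw [norm_pow]
          have hj' := Finset.mem_range.mp hj
          exact pow_le_pow_right₀ hr1 (by omega : j ≤ n - 1)
      _ = ((n-1 : ℕ):ℝ) * r^(n-1) := by
          rw [Finset.sum_const, Finset.card_range, nsmul_eq_mul]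
  have habs : (p:ℝ) * r^n ≤ ((p:ℝ) - k) * r^(n-1) + ((n-1:ℕ):ℝ) * r^(n-1) := by
    have e1 : (p:ℝ) * r^n = ‖(p:ℂ) * z^n‖ := by
      rw [norm_mul, norm_pow, Complex.norm_natCast]
    rw [e1, key]
    exact le_trans (norm_add_le _ _) (by rw [h2]; exact add_le_add_right h3 _)
  have e : r^n = r * r^(n-1) := by
    rw [← pow_succ']
    congr 1
    omega
  have hple : (p:ℝ) * r ≤ (p:ℝ) - k + ((n-1:ℕ):ℝ) := by
    have := habs
    rw [e, ← mul_assoc, ← add_mul] at this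
    exact le_of_mul_le_mul_right this hrpos
  have hc1 : (k:ℝ) < p := by exact_mod_cast hkp
  have hc2 : ((n-1:ℕ):ℝ) = (n:ℝ) - 1 := by
    push_cast [Nat.cast_sub hn]; ring
  have hc3 : (n:ℝ) ≤ k := by exact_mod_cast hnk
  have hc4 : (p:ℝ) ≤ (p:ℝ) * r := le_mul_of_one_le_right (by positivity) hr1
  linarith

lemma cc_no_unit_lead (k p n : ℕ) (hn2 : 2 ≤ n) (hnk : n ≤ k) (hkp : k < p) (hp : p ≠ 0)
    (A B : Polynomial ℤ) (hAB : ccFF k p n = A * B) (hA : 1 ≤ A.natDegree)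
    (hu : IsUnit A.leadingCoeff) : False := by
  have hinj : Function.Injective (Int.castRingHom ℂ) := Int.cast_injective
  -- coeff 0 of A is a unit
  have hc0 : A.coeff 0 * B.coeff 0 = -1 := by
    have h := ccFF_coeff_zero k p n hn2
    rw [hAB, mul_coeff_zero] at h
    exact h
  have hA0 : IsUnit (A.coeff 0) := IsUnit.of_mul_eq_one (-(B.coeff 0)) (by linarith [hc0])
  set A' := A.map (Int.castRingHom ℂ) with hA'
  have hAne : A ≠ 0 := by
    intro h
    exact ccFF_ne_zero k p n (by omega) hp (by rw [hAB, h, zero_mul])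
  have hA'ne : A' ≠ 0 := (Polynomial.map_ne_zero_iff hinj).mpr hAne
  have hdeg : A'.natDegree = A.natDegree := natDegree_map_eq_of_injective hinj A
  have hdegpos : 0 < A'.degree := natDegree_pos_iff_degree_pos.mp (by omega)
  obtain ⟨z₀, hz₀⟩ := Complex.exists_root hdegpos
  have hz₀mem : z₀ ∈ A'.roots := by
    rw [mem_roots hA'ne]
    exact hz₀
  -- all roots of A' have abs < 1
  have hroots : ∀ z ∈ A'.roots, ‖z‖ < 1 := by
    intro z hz
    apply ccFF_root_bound k p n (by omega) hnk hkp
    have hzr : A'.eval z = 0 := (mem_roots hA'ne).mp hz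
    rw [hAB, Polynomial.map_mul, eval_mul, hzr, zero_mul]
  -- Vieta
  have hsplit : Splits A' := IsAlgClosed.splits A'
  have heq := hsplit.eq_prod_roots
  have heval : A'.eval 0 = A'.leadingCoeff * (A'.roots.map (fun a => -a)).prod := by
    conv_lhs => rw [heq]
    rw [eval_mul, eval_C, eval_multiset_prod, Multiset.map_map]
    congr 1
    rw [Multiset.map_congr rfl (fun a _ => by simp : ∀ a ∈ A'.roots, (eval 0 ∘ fun a => X - C a) a = -a)]
  -- abs of eval 0 is 1
  have habs0 : ‖A'.eval 0‖ = 1 := by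
    have : A'.eval 0 = ((A.coeff 0 : ℤ) : ℂ) := by
      rw [← coeff_zero_eq_eval_zero, hA', coeff_map]
      rfl
    rw [this]
    rcases Int.isUnit_iff.mp hA0 with h | h <;> simp [h]
  -- abs of leadingCoeff is 1
  have hlc : ‖A'.leadingCoeff‖ = 1 := by
    have : A'.leadingCoeff = ((A.leadingCoeff : ℤ) : ℂ) := leadingCoeff_map_of_injective hinj A
    rw [this]
    rcases Int.isUnit_iff.mp hu with h | h <;> simp [h]
  -- product of abs of roots equals 1
  have hprod : (A'.roots.map (fun a => ‖a‖)).prod = 1 := by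
    have h1 : ‖A'.eval 0‖ =
        ‖A'.leadingCoeff‖ * (A'.roots.map (fun a => ‖-a‖)).prod := by
      rw [heval, norm_mul]
      congr 1
      exact map_multiset_prod (normHom (α := ℂ)) _ |>.trans (by rw [Multiset.map_map]; rfl)
    simp only [norm_neg] at h1
    rw [habs0, hlc, one_mul] at h1
    exact h1.symm
  -- but the product is < 1
  obtain ⟨t, ht⟩ := Multiset.exists_cons_of_mem hz₀mem
  have habslt : (A'.roots.map (fun a => ‖a‖)).prod < 1 := by
    rw [ht, Multiset.map_cons, Multiset.prod_cons]
    have h1 : ‖z₀‖ < 1 := hroots z₀ hz₀mem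
    have h2 : (t.map (fun a => ‖a‖)).prod ≤ 1 := by
      apply cc_ms_le_one
      intro x hx
      obtain ⟨a, ha, rfl⟩ := Multiset.mem_map.mp hx
      exact ⟨norm_nonneg a, le_of_lt (hroots a (by rw [ht]; exact Multiset.mem_cons_of_mem ha))⟩
    have h3 : 0 ≤ (t.map (fun a => ‖a‖)).prod := by
      apply cc_ms_nonneg
      intro x hx
      obtain ⟨a, ha, rfl⟩ := Multiset.mem_map.mp hx
      exact norm_nonneg a
    calc ‖z₀‖ * (t.map (fun a => ‖a‖)).prod ≤ ‖z₀‖ * 1 :=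
          mul_le_mul_of_nonneg_left h2 (norm_nonneg z₀)
      _ < 1 := by rwa [mul_one]
  rw [hprod] at habslt
  exact lt_irrefl _ habslt

lemma cc_const_unit (k p n : ℕ) (hk : 1 ≤ k) (hpp : p.Prime) (hkp : k < p)
    (hn : 1 ≤ n) (a : ℤ) (hdvd : C a ∣ ccFF k p n) : IsUnit a := by
  rcases Nat.lt_or_ge n 2 with h2 | h2
  · have hn1 : n = 1 := by omega
    subst hn1
    rw [ccFF_one] at hdvd
    have h1 : a ∣ (C (p:ℤ) * X + C ((k:ℤ) - p)).coeff 1 := (C_dvd_iff_dvd_coeff _ _).mp hdvd 1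
    have h0 : a ∣ (C (p:ℤ) * X + C ((k:ℤ) - p)).coeff 0 := (C_dvd_iff_dvd_coeff _ _).mp hdvd 0
    simp [coeff_C] at h1 h0
    have hak : a ∣ (k:ℤ) := by
      have := dvd_add h0 h1
      simpa using this
    have hco : IsCoprime (p:ℤ) (k:ℤ) := by
      rw [Int.isCoprime_iff_gcd_eq_one, Int.gcd_natCast_natCast]
      exact (Nat.Prime.coprime_iff_not_dvd hpp).mpr
        (fun hd => by have := Nat.le_of_dvd (by omega) hd; omega)
    exact hco.isUnit_of_dvd' h1 hak
  · have h0 : a ∣ (ccFF k p n).coeff 0 := (C_dvd_iff_dvd_coeff _ _).mp hdvd 0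
    rw [ccFF_coeff_zero k p n h2] at h0
    exact isUnit_of_dvd_one (dvd_neg.mp h0)

lemma ccFF_primitive (k p n : ℕ) (hk : 1 ≤ k) (hpp : p.Prime) (hkp : k < p) (hn : 1 ≤ n) :
    IsPrimitive (ccFF k p n) :=
  fun a hdvd => cc_const_unit k p n hk hpp hkp hn a hdvd

lemma ccFF_irred (k p n : ℕ) (hk : 1 ≤ k) (hpp : p.Prime) (hkp : k < p)
    (hn : 1 ≤ n) (hnk : n ≤ k) : Irreducible (ccFF k p n) := by
  have hp0 : p ≠ 0 := hpp.ne_zero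
  constructor
  · intro hu
    have := natDegree_eq_zero_of_isUnit hu
    rw [ccFF_natDegree k p n hn hp0] at this
    omega
  · intro A B hAB
    by_contra hcon
    push_neg at hcon
    obtain ⟨huA, huB⟩ := hcon
    have hAne : A ≠ 0 := fun h => ccFF_ne_zero k p n hn hp0 (by rw [hAB, h, zero_mul])
    have hBne : B ≠ 0 := fun h => ccFF_ne_zero k p n hn hp0 (by rw [hAB, h, mul_zero])
    have hdeg : A.natDegree + B.natDegree = n := by
      rw [← ccFF_natDegree k p n hn hp0, hAB, natDegree_mul hAne hBne]
    have hdA : 1 ≤ A.natDegree := by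
      by_contra h
      push_neg at h
      have h0 : A.natDegree = 0 := by omega
      obtain ⟨a, rfl⟩ := natDegree_eq_zero.mp h0
      exact huA (isUnit_C.mpr (cc_const_unit k p n hk hpp hkp hn a ⟨B, hAB⟩))
    have hdB : 1 ≤ B.natDegree := by
      by_contra h
      push_neg at h
      have h0 : B.natDegree = 0 := by omega
      obtain ⟨b, rfl⟩ := natDegree_eq_zero.mp h0
      exact huB (isUnit_C.mpr (cc_const_unit k p n hk hpp hkp hn b ⟨A, by rw [hAB, mul_comm]⟩))
    have hn2 : 2 ≤ n := by omega
    have hlc : (p:ℤ) = A.leadingCoeff * B.leadingCoeff := by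
      rw [← ccFF_leadingCoeff k p n hn hp0, hAB, leadingCoeff_mul]
    rcases (Nat.prime_iff_prime_int.mp hpp).irreducible.isUnit_or_isUnit hlc with h | h
    · exact cc_no_unit_lead k p n hn2 hnk hkp hp0 A B hAB hdA h
    · exact cc_no_unit_lead k p n hn2 hnk hkp hp0 B A (by rw [hAB, mul_comm]) hdB h

lemma cc_reducible (k p : ℕ) (hk : 1 ≤ k) (hp : p ≠ 0) :
    ¬ Irreducible ((ccFF k p (k+1)).map (Int.castRingHom ℚ)) := by
  intro h
  set q := (ccFF k p (k+1)).map (Int.castRingHom ℚ) with hq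
  have hdq : q.natDegree = k + 1 := by
    rw [hq, natDegree_map_eq_of_injective Int.cast_injective,
      ccFF_natDegree k p (k+1) (by omega) hp]
  have hq1 : q.eval 1 = 0 := by
    rw [hq, eval_one_map, ccFF_eval_one]
    exact map_zero _
  obtain ⟨r, hr⟩ := dvd_iff_isRoot.mpr hq1
  rcases h.isUnit_or_isUnit hr with h1 | h2
  · exact not_isUnit_X_sub_C _ h1
  · have hqne : q ≠ 0 := fun h0 => by rw [h0] at hdq; simp at hdq
    have hrne : r ≠ 0 := fun h0 => hqne (by rw [hr, h0, mul_zero])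
    have : q.natDegree = 1 := by
      rw [hr, natDegree_mul (X_sub_C_ne_zero 1) hrne, natDegree_X_sub_C,
        natDegree_eq_zero_of_isUnit h2]
    omega

theorem stmt18 (k : ℕ) (hk : 1 ≤ k) :
    {f₁ : Polynomial ℤ | 0 < f₁.leadingCoeff ∧
      ∀ f : ℕ → Polynomial ℤ, f 1 = f₁ → (∀ n, 2 ≤ n → f n = X * f (n - 1) - 1) →
        (∀ n, 1 ≤ n → n ≤ k → Irreducible ((f n).map (Int.castRingHom ℚ))) ∧
        ¬ Irreducible ((f (k + 1)).map (Int.castRingHom ℚ))}.Infinite := by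
  set S := {f₁ : Polynomial ℤ | 0 < f₁.leadingCoeff ∧
      ∀ f : ℕ → Polynomial ℤ, f 1 = f₁ → (∀ n, 2 ≤ n → f n = X * f (n - 1) - 1) →
        (∀ n, 1 ≤ n → n ≤ k → Irreducible ((f n).map (Int.castRingHom ℚ))) ∧
        ¬ Irreducible ((f (k + 1)).map (Int.castRingHom ℚ))} with hS
  have hmem : ∀ p : ℕ, p.Prime → k < p → ccFF k p 1 ∈ S := by
    intro p hpp hkp
    constructor
    · rw [ccFF_one, leadingCoeff_linear (by exact_mod_cast hpp.ne_zero : (p:ℤ) ≠ 0)]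
      exact_mod_cast hpp.pos
    · intro f hf1 hrec
      have hch := ccFF_chain k p f hf1 hrec
      constructor
      · intro n hn hnk
        rw [hch n hn]
        exact (IsPrimitive.Int.irreducible_iff_irreducible_map_cast
          (ccFF_primitive k p n hk hpp hkp hn)).mp (ccFF_irred k p n hk hpp hkp hn hnk)
      · rw [hch (k+1) (by omega)]
        exact cc_reducible k p hk hpp.ne_zero
  have hPinf : {p : ℕ | p.Prime ∧ k < p}.Infinite := by
    have h2 : {p : ℕ | p.Prime ∧ k < p} = {p | p.Prime} \ Set.Iic k := by
      ext q
      simp [Set.mem_diff, Set.mem_Iic, not_le]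
    rw [h2]
    exact Nat.infinite_setOf_prime.diff (Set.finite_Iic k)
  have himg : ((fun p : ℕ => ccFF k p 1) '' {p : ℕ | p.Prime ∧ k < p}).Infinite := by
    apply hPinf.image
    intro a _ b _ h
    have hco : ((a:ℤ)) = (b:ℤ) := by
      have h1 := congrArg (fun q : Polynomial ℤ => q.coeff 1) h
      simpa [ccFF_one, coeff_C] using h1
    exact_mod_cast hco
  apply Set.Infinite.mono _ himg
  rintro q ⟨p, hp, rfl⟩
  exact hmem p hp.1 hp.2
end
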